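/- Let $(A_m)_{m\in\mathbb{Z}}$ be a uniformly bounded sequence of invertible bounded operators on a Banach space $X$ admitting an exponential dichotomy. Then for each sequence $(y_n)_{n\in\mathbb{Z}}\subset X$ with $\lim_{|n|\to\infty}\|y_{n+1}-A_ny_n\|=0$, there exists a unique sequence $(x_n)_{n\in\mathbb{Z}}$ satisfying $x_{n+1}=A_nx_n$ for all $n$ and $\lim_{|n|\to\infty}\|x_n-y_n\|=0$. -/

import Mathlib

open Filter Topology

lemma summable_exp_neg_abs_int {lam : ℝ} (hlam : 0 < lam) :
    Summable (fun j : ℤ => Real.exp (-lam * |(j : ℝ)|)) := by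
  have hnat : Summable (fun n : ℕ => Real.exp (-lam * n)) := by
    have h : ∀ n : ℕ, Real.exp (-lam * n) = (Real.exp (-lam)) ^ n := by
      intro n; rw [← Real.exp_nat_mul]; ring_nf
    simp only [h]
    exact summable_geometric_of_lt_one (Real.exp_pos _).le
      (Real.exp_lt_one_iff.mpr (by linarith))
  apply Summable.of_nat_of_neg
  · simpa using hnat
  · simpa using hnat



/-- The sequence `A` of bounded operators admits an exponential dichotomy: there exist
an evolution family `E`, projections `P` commuting with the dynamics and constants
`C, lam > 0` with the usual exponential bounds. -/
def ExpDichotomy {X : Type*} [NormedAddCommGroup X] [NormedSpace ℝ X]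
    (A : ℤ → X →L[ℝ] X) : Prop :=
  ∃ (E : ℤ → ℤ → X →L[ℝ] X) (P : ℤ → X →L[ℝ] X) (C lam : ℝ),
    0 < C ∧ 0 < lam ∧
    (∀ n, E n n = ContinuousLinearMap.id ℝ X) ∧
    (∀ m n, E (m + 1) n = (A m).comp (E m n)) ∧
    (∀ m, (P m).comp (P m) = P m) ∧
    (∀ m, (P (m + 1)).comp (A m) = (A m).comp (P m)) ∧
    (∀ m n, n ≤ m → ‖(E m n).comp (P n)‖ ≤ C * Real.exp (-lam * ((m - n : ℤ) : ℝ))) ∧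
    (∀ m n, m ≤ n → ‖(E m n).comp (ContinuousLinearMap.id ℝ X - P n)‖ ≤
      C * Real.exp (-lam * ((n - m : ℤ) : ℝ)))

/-- Limit shadowing for linear systems: if the defect of `(y n)` tends to `0` as `|n| → ∞`,
there is a unique true trajectory of the linear system asymptotic to `(y n)`. -/
theorem linear_limit_shadowing {X : Type*} [NormedAddCommGroup X]
    [NormedSpace ℝ X] [CompleteSpace X]
    (A : ℤ → X ≃L[ℝ] X) (M : ℝ) (hM : ∀ m, ‖(A m : X →L[ℝ] X)‖ ≤ M)
    (hED : ExpDichotomy fun m => (A m : X →L[ℝ] X))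
    (y : ℤ → X)
    (hy : Filter.Tendsto (fun n => ‖y (n + 1) - A n (y n)‖) (Filter.cocompact ℤ) (nhds 0)) :
    ∃! x : ℤ → X, (∀ n, x (n + 1) = A n (x n)) ∧
      Filter.Tendsto (fun n => ‖x n - y n‖) (Filter.cocompact ℤ) (nhds 0) := by
  obtain ⟨E, P, C, lam, hC, hlam, hEid, hErec, hPproj, hPcomm, hb1, hb2⟩ := hED
  simp only [cocompact_eq_atBot_atTop, tendsto_sup] at hy ⊢
  obtain ⟨hybot, hytop⟩ := hy
  -- pointwise versions
  have hErec' : ∀ m n (v : X), E (m + 1) n v = A m (E m n v) := by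
    intro m n v
    have := DFunLike.congr_fun (hErec m n) v
    simpa using this
  have hPcomm' : ∀ m (v : X), P (m + 1) (A m v) = A m (P m v) := by
    intro m v
    have := DFunLike.congr_fun (hPcomm m) v
    simpa using this
  -- the commuting of P with the evolution family
  have com : ∀ (n m : ℤ) (v : X), P m (E m n v) = E m n (P n v) := by
    intro n m v
    have key : ∀ j : ℤ, ∀ v : X, P (n + j) (E (n + j) n v) = E (n + j) n (P n v) := by
      intro j
      induction j using Int.induction_on with
      | zero => intro v; simp [hEid]
      | succ i ih =>
        intro v
        have e1 : n + ((i : ℤ) + 1) = (n + i) + 1 := by ring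
        rw [e1, hErec' (n + i) n v, hPcomm' (n + i), ih v, hErec' (n + i) n]
      | pred i ih =>
        intro v
        set m := n + (-(i : ℤ) - 1) with hm
        have e1 : m + 1 = n + (-(i : ℤ)) := by rw [hm]; ring
        apply (A m).injective
        calc A m (P m (E m n v)) = P (m + 1) (A m (E m n v)) := (hPcomm' m _).symm
          _ = P (m + 1) (E (m + 1) n v) := by rw [hErec' m n v]
          _ = E (m + 1) n (P n v) := by rw [e1]; exact ih v
          _ = A m (E m n (P n v)) := hErec' m n _
    have h := key (m - n) v
    rwa [show n + (m - n) = m by ring] at h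
  -- any trajectory is given by the evolution family
  have traj : ∀ (d : ℤ → X), (∀ n, d (n + 1) = A n (d n)) → ∀ n m, d m = E m n (d n) := by
    intro d hd n m
    have key : ∀ j : ℤ, d (n + j) = E (n + j) n (d n) := by
      intro j
      induction j using Int.induction_on with
      | zero => simp [hEid]
      | succ i ih =>
        have e1 : n + ((i : ℤ) + 1) = (n + i) + 1 := by ring
        rw [e1, hd (n + i), ih, hErec' (n + i) n]
      | pred i ih =>
        set m := n + (-(i : ℤ) - 1) with hm
        have e1 : m + 1 = n + (-(i : ℤ)) := by rw [hm]; ring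
        apply (A m).injective
        calc A m (d m) = d (m + 1) := (hd m).symm
          _ = E (m + 1) n (d n) := by rw [e1]; exact ih
          _ = A m (E m n (d n)) := hErec' m n _
    have h := key (m - n)
    rwa [show n + (m - n) = m by ring] at h
  -- defect sequence
  set g : ℤ → X := fun k => A k (y k) - y (k + 1) with hgdef
  have hgbot : Tendsto (fun k => ‖g k‖) atBot (𝓝 0) := by
    simpa [hgdef, norm_sub_rev] using hybot
  have hgtop : Tendsto (fun k => ‖g k‖) atTop (𝓝 0) := by
    simpa [hgdef, norm_sub_rev] using hytop
  -- boundedness of g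
  obtain ⟨B, hB0, hB⟩ : ∃ B : ℝ, 0 ≤ B ∧ ∀ k, ‖g k‖ ≤ B := by
    have hcof : Tendsto (fun k => ‖g k‖) cofinite (𝓝 0) := by
      rw [Int.cofinite_eq, tendsto_sup]; exact ⟨hgbot, hgtop⟩
    have h1 : ∀ᶠ k in cofinite, ‖g k‖ < 1 :=
      hcof.eventually_lt_const one_pos
    have hfin : {k : ℤ | ¬ ‖g k‖ < 1}.Finite :=
      Filter.eventually_cofinite.mp h1
    refine ⟨1 + ∑ k ∈ hfin.toFinset, ‖g k‖, by positivity, fun k => ?_⟩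
    by_cases hk : ‖g k‖ < 1
    · have : (0:ℝ) ≤ ∑ k ∈ hfin.toFinset, ‖g k‖ :=
        Finset.sum_nonneg fun _ _ => norm_nonneg _
      linarith
    · have hk' : k ∈ hfin.toFinset := by simpa using hk
      have := Finset.single_le_sum (f := fun k => ‖g k‖)
        (fun _ _ => norm_nonneg _) hk'
      linarith
  -- the summable kernel
  set kap : ℤ → ℝ := fun j => C * Real.exp (-lam * |(j : ℝ)|) with hkapdef
  have hkap0 : ∀ j, 0 ≤ kap j := fun j => by positivity
  have hkapsum : Summable kap := (summable_exp_neg_abs_int hlam).mul_left C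
  -- the Green function
  set G : ℤ → ℤ → X →L[ℝ] X := fun n k =>
    if k ≤ n then (E n k).comp (P k)
    else -((E n k).comp (ContinuousLinearMap.id ℝ X - P k)) with hGdef
  have hGnorm : ∀ n k, ‖G n k‖ ≤ kap (n - k) := by
    intro n k
    by_cases h : k ≤ n
    · simp only [hGdef, if_pos h]
      refine (hb1 n k h).trans_eq ?_
      simp only [hkapdef]
      rw [abs_of_nonneg (by exact_mod_cast sub_nonneg.mpr h : (0:ℝ) ≤ ((n - k : ℤ) : ℝ))]
    · simp only [hGdef, if_neg h, norm_neg]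
      refine (hb2 n k (by omega)).trans_eq ?_
      simp only [hkapdef]
      have habs : |((n - k : ℤ) : ℝ)| = ((k - n : ℤ) : ℝ) := by
        have h2 : ((n - k : ℤ) : ℝ) = -((k - n : ℤ) : ℝ) := by push_cast; ring
        rw [h2, abs_neg,
          abs_of_nonneg (by exact_mod_cast sub_nonneg.mpr (le_of_not_ge h) : (0:ℝ) ≤ ((k - n : ℤ) : ℝ))]
      rw [habs]
  have hGrec : ∀ n k (v : X), G (n + 1) k v = A n (G n k v) + (if k = n + 1 then v else 0) := by
    intro n k v
    by_cases hk : k ≤ n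
    · have hk1 : k ≤ n + 1 := by omega
      have hk2 : k ≠ n + 1 := by omega
      simp only [hGdef, if_pos hk, if_pos hk1, if_neg hk2, add_zero, hErec n k]
      simp
    by_cases hk2 : k = n + 1
    · subst hk2
      have h1 : ¬ (n + 1 ≤ n) := by omega
      simp only [hGdef, if_pos (le_refl (n+1)), if_neg h1, if_pos rfl, hEid]
      have hA : ∀ w : X, A n (E n (n + 1) w) = w := by
        intro w
        have := hErec' n (n + 1) w
        rw [hEid] at this
        simpa using this.symm
      simp only [ContinuousLinearMap.comp_apply, ContinuousLinearMap.neg_apply,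
        ContinuousLinearMap.sub_apply, ContinuousLinearMap.id_apply, ContinuousLinearMap.coe_id']
      rw [map_neg, hA]
      abel_nf
      simp
    · have h1 : ¬ (k ≤ n + 1) := by omega
      simp only [hGdef, if_neg hk, if_neg h1, if_neg hk2, add_zero, hErec n k]
      simp
  -- summability of the series defining the correction
  have hterm : ∀ n k : ℤ, ‖G n (k+1) (g k)‖ ≤ kap (n - (k+1)) * B := by
    intro n k
    calc ‖G n (k+1) (g k)‖ ≤ ‖G n (k+1)‖ * ‖g k‖ := (G n (k+1)).le_opNorm _
    _ ≤ kap (n - (k+1)) * B :=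
        mul_le_mul (hGnorm n (k+1)) (hB k) (norm_nonneg _) (hkap0 _)
  have hkapshift : ∀ n : ℤ, Summable (fun k : ℤ => kap (n - (k+1))) := by
    intro n
    have hinj : Function.Injective (fun k : ℤ => n - (k+1)) := by
      intro a b hab; simp only at hab; omega
    exact hkapsum.comp_injective hinj
  have hsum : ∀ n, Summable (fun k : ℤ => G n (k+1) (g k)) := fun n =>
    Summable.of_norm_bounded ((hkapshift n).mul_right B) (hterm n)
  -- the correction sequence
  set w : ℤ → X := fun n => ∑' k : ℤ, G n (k+1) (g k) with hwdef
  have hwrec : ∀ n, w (n+1) = A n (w n) + g n := by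
    intro n
    have h1 : ∀ k : ℤ, G (n+1) (k+1) (g k)
        = (A n : X →L[ℝ] X) (G n (k+1) (g k)) + (if k = n then g k else 0) := by
      intro k
      rw [hGrec n (k+1) (g k)]
      congr 1
      by_cases hk : k = n
      · simp [hk]
      · simp [hk, show ¬ (k + 1 = n + 1) from by omega]
    have hs1 : Summable (fun k : ℤ => (A n : X →L[ℝ] X) (G n (k+1) (g k))) :=
      (hsum n).map (A n : X →L[ℝ] X) (A n : X →L[ℝ] X).continuous
    have hs2 : Summable (fun k : ℤ => if k = n then g k else 0) := by
      apply summable_of_ne_finset_zero (s := {n})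
      intro b hb
      simp only [Finset.mem_singleton] at hb
      simp [hb]
    calc w (n+1) = ∑' k : ℤ, ((A n : X →L[ℝ] X) (G n (k+1) (g k))
          + (if k = n then g k else 0)) := tsum_congr h1
    _ = (∑' k : ℤ, (A n : X →L[ℝ] X) (G n (k+1) (g k)))
          + ∑' k : ℤ, (if k = n then g k else 0) := Summable.tsum_add hs1 hs2
    _ = A n (w n) + g n := by
        rw [← (A n : X →L[ℝ] X).map_tsum (hsum n), tsum_eq_single n (fun b hb => if_neg hb)]
        simp [hwdef]
  -- norm bound on w
  have hnormsum : ∀ n, Summable (fun k : ℤ => ‖G n (k+1) (g k)‖) := fun n =>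
    Summable.of_nonneg_of_le (fun k => norm_nonneg _) (hterm n) ((hkapshift n).mul_right B)
  have hmidsum : ∀ n, Summable (fun k : ℤ => kap (n - (k+1)) * ‖g k‖) := fun n =>
    Summable.of_nonneg_of_le (fun k => mul_nonneg (hkap0 _) (norm_nonneg _))
      (fun k => mul_le_mul_of_nonneg_left (hB k) (hkap0 _)) ((hkapshift n).mul_right B)
  have hwle : ∀ n, ‖w n‖ ≤ ∑' j : ℤ, kap j * ‖g (n - 1 - j)‖ := by
    intro n
    calc ‖w n‖ ≤ ∑' k : ℤ, ‖G n (k+1) (g k)‖ := norm_tsum_le_tsum_norm (hnormsum n)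
    _ ≤ ∑' k : ℤ, kap (n - (k+1)) * ‖g k‖ := Summable.tsum_le_tsum
        (fun k => le_trans ((G n (k+1)).le_opNorm _)
          (mul_le_mul_of_nonneg_right (hGnorm n (k+1)) (norm_nonneg _)))
        (hnormsum n) (hmidsum n)
    _ = ∑' j : ℤ, kap j * ‖g (n - 1 - j)‖ := by
        rw [← (Equiv.subLeft (n-1)).tsum_eq (fun k : ℤ => kap (n - (k+1)) * ‖g k‖)]
        apply tsum_congr
        intro j
        rw [Equiv.subLeft_apply]
        have e2 : n - ((n - 1 - j) + 1) = j := by ring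
        rw [e2]
  -- convergence of the dominating series
  have hconv : ∀ (l : Filter ℤ), Tendsto (fun k : ℤ => ‖g k‖) l (𝓝 0) →
      (∀ j : ℤ, Tendsto (fun n : ℤ => n - 1 - j) l l) →
      Tendsto (fun n : ℤ => ∑' j : ℤ, kap j * ‖g (n - 1 - j)‖) l (𝓝 0) := by
    intro l hgl hsh
    have hDC := tendsto_tsum_of_dominated_convergence (𝓕 := l)
      (f := fun (n j : ℤ) => kap j * ‖g (n - 1 - j)‖) (g := fun _ : ℤ => (0:ℝ))
      (bound := fun j : ℤ => kap j * B) (hkapsum.mul_right B)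
      (fun j => by simpa using ((hgl.comp (hsh j)).const_mul (kap j)))
      (Filter.Eventually.of_forall (fun n j => by
        rw [Real.norm_eq_abs, abs_of_nonneg (mul_nonneg (hkap0 j) (norm_nonneg _))]
        exact mul_le_mul_of_nonneg_left (hB _) (hkap0 j)))
    simpa using hDC
  have hwtop : Tendsto (fun n => ‖w n‖) atTop (𝓝 0) :=
    squeeze_zero (fun n => norm_nonneg _) hwle
      (hconv atTop hgtop (fun j => tendsto_atTop_atTop.mpr fun b => ⟨b + 1 + j, fun a ha => by omega⟩))
  have hwbot : Tendsto (fun n => ‖w n‖) atBot (𝓝 0) :=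
    squeeze_zero (fun n => norm_nonneg _) hwle
      (hconv atBot hgbot (fun j => tendsto_atBot_atBot.mpr fun b => ⟨b + 1 + j, fun a ha => by omega⟩))
  -- the candidate shadowing trajectory
  set x : ℤ → X := fun n => y n + w n with hxdef
  have hxt : ∀ n, x (n+1) = A n (x n) := by
    intro n
    show y (n+1) + w (n+1) = A n (y n + w n)
    rw [hwrec n, map_add]
    have hgn : g n = A n (y n) - y (n+1) := rfl
    rw [hgn]
    abel
  have hxy : ∀ n, ‖x n - y n‖ = ‖w n‖ := by
    intro n; simp [hxdef]
  refine ⟨x, ⟨hxt, by simpa only [hxy] using hwbot, by simpa only [hxy] using hwtop⟩, ?_⟩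
  -- uniqueness
  rintro x' ⟨hx't, hx'bot, hx'top⟩
  funext n
  set d : ℤ → X := fun m => x' m - x m with hddef
  have hdt : ∀ m, d (m+1) = A m (d m) := by
    intro m
    simp only [hddef]
    rw [hx't m, hxt m, map_sub]
  have hdle : ∀ m, ‖d m‖ ≤ ‖x' m - y m‖ + ‖x m - y m‖ := by
    intro m
    have : d m = (x' m - y m) - (x m - y m) := by simp only [hddef]; abel
    rw [this]
    exact norm_sub_le _ _
  have hdbot : Tendsto (fun m => ‖d m‖) atBot (𝓝 0) := by
    refine squeeze_zero (fun m => norm_nonneg _) hdle ?_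
    simpa using hx'bot.add (by simpa only [hxy] using hwbot)
  have hdtop : Tendsto (fun m => ‖d m‖) atTop (𝓝 0) := by
    refine squeeze_zero (fun m => norm_nonneg _) hdle ?_
    simpa using hx'top.add (by simpa only [hxy] using hwtop)
  -- the stable part of d n vanishes
  have hexp1 : ∀ a b : ℤ, a ≤ b → Real.exp (-lam * ((b - a : ℤ) : ℝ)) ≤ 1 := by
    intro a b hab
    rw [Real.exp_le_one_iff]
    have hc : (0:ℝ) ≤ ((b - a : ℤ) : ℝ) := by exact_mod_cast sub_nonneg.mpr hab
    nlinarith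
  have hPd : P n (d n) = 0 := by
    have hle : ∀ m, m ≤ n → ‖P n (d n)‖ ≤ C * ‖d m‖ := by
      intro m hm
      have h1 : P n (d n) = ((E n m).comp (P m)) (d m) := by
        rw [ContinuousLinearMap.comp_apply, ← com m n (d m), ← traj d hdt m n]
      rw [h1]
      calc ‖((E n m).comp (P m)) (d m)‖ ≤ ‖(E n m).comp (P m)‖ * ‖d m‖ :=
        ((E n m).comp (P m)).le_opNorm _
      _ ≤ (C * Real.exp (-lam * ((n - m : ℤ) : ℝ))) * ‖d m‖ :=
        mul_le_mul_of_nonneg_right (hb1 n m hm) (norm_nonneg _)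
      _ ≤ C * ‖d m‖ := by
        have h2 := hexp1 m n hm
        have h3 := mul_le_mul_of_nonneg_right
          (mul_le_mul_of_nonneg_left h2 hC.le) (norm_nonneg (d m))
        simpa using h3
    have hlim : Tendsto (fun m : ℤ => C * ‖d m‖) atBot (𝓝 0) := by
      simpa using hdbot.const_mul C
    have hle0 : ‖P n (d n)‖ ≤ 0 :=
      ge_of_tendsto hlim (eventually_atBot.mpr ⟨n, fun m hm => hle m hm⟩)
    simpa using norm_le_zero_iff.mp hle0
  have hQd : d n - P n (d n) = 0 := by
    have hle : ∀ m, n ≤ m → ‖d n - P n (d n)‖ ≤ C * ‖d m‖ := by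
      intro m hm
      have h1 : d n - P n (d n) =
          ((E n m).comp (ContinuousLinearMap.id ℝ X - P m)) (d m) := by
        simp only [ContinuousLinearMap.comp_apply, ContinuousLinearMap.sub_apply,
          ContinuousLinearMap.id_apply, map_sub]
        rw [← com m n (d m), ← traj d hdt m n]
      rw [h1]
      calc ‖((E n m).comp (ContinuousLinearMap.id ℝ X - P m)) (d m)‖
          ≤ ‖(E n m).comp (ContinuousLinearMap.id ℝ X - P m)‖ * ‖d m‖ :=
        ContinuousLinearMap.le_opNorm _ _
      _ ≤ (C * Real.exp (-lam * ((m - n : ℤ) : ℝ))) * ‖d m‖ :=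
        mul_le_mul_of_nonneg_right (hb2 n m hm) (norm_nonneg _)
      _ ≤ C * ‖d m‖ := by
        have h2 := hexp1 n m hm
        have h3 := mul_le_mul_of_nonneg_right
          (mul_le_mul_of_nonneg_left h2 hC.le) (norm_nonneg (d m))
        simpa using h3
    have hlim : Tendsto (fun m : ℤ => C * ‖d m‖) atTop (𝓝 0) := by
      simpa using hdtop.const_mul C
    have hle0 : ‖d n - P n (d n)‖ ≤ 0 :=
      ge_of_tendsto hlim (eventually_atTop.mpr ⟨n, fun m hm => hle m hm⟩)
    simpa using norm_le_zero_iff.mp hle0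
  have hd0 : d n = 0 := by
    have := hQd
    rw [hPd, sub_zero] at this
    exact this
  have := hd0
  simp only [hddef] at this
  exact sub_eq_zero.mp this
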